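/- Let H be a pattern graph on k vertices with minimum degree at least 2 (no pendant vertices). Let G be a graph and let G' be obtained from G by adding new vertices and edges such that every newly added edge lies on a path all of whose internal vertices are new vertices of degree 2 and whose length is at least k+1 (i.e., new edges arise from subdividing auxiliary edges k times). Then H is isomorphic to a subgraph of G' if and only if H is isomorphic to a subgraph of G. -/
import Mathlib


open scoped Classical

private lemma getVert_eq_support_getElem' {V : Type*} {G : SimpleGraph V} {u v : V}
    (p : G.Walk u v) {i : ℕ} (h : i ≤ p.length) :
    p.getVert i = p.support[i]'(by rw [SimpleGraph.Walk.length_support]; omega) := by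
  induction p generalizing i with
  | nil =>
    have hi : i = 0 := Nat.le_zero.mp (by simpa using h)
    subst hi
    simp
  | cons h' q ih =>
    cases i with
    | zero => simp
    | succ n =>
      simp only [SimpleGraph.Walk.getVert_cons_succ, SimpleGraph.Walk.support_cons,
        List.getElem_cons_succ]
      exact ih (by simpa using h)

private lemma path_getVert_inj {V : Type*} {G : SimpleGraph V} {u v : V}
    {p : G.Walk u v} (hp : p.IsPath) {i j : ℕ} (hi : i ≤ p.length) (hj : j ≤ p.length)
    (h : p.getVert i = p.getVert j) : i = j := by
  rw [getVert_eq_support_getElem' p hi, getVert_eq_support_getElem' p hj] at h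
  exact (hp.support_nodup.getElem_inj_iff).mp h

/-- `H` is isomorphic to a subgraph of `G`: there is an injective graph homomorphism. -/
def IsSubgraphOf {W X : Type*} (H : SimpleGraph W) (G : SimpleGraph X) : Prop :=
  ∃ f : H →g G, Function.Injective f

/-- Let `H` be a pattern on `k` vertices with minimum degree at least `2`.  Let `G'` be
obtained from `G` by adding new vertices and edges (old vertices are embedded via `ι`,
with old-old adjacency unchanged) such that every edge incident to a new vertex lies on a
path of length at least `k+1` between old vertices all of whose internal vertices are new
vertices of degree `2`.  Then `H` is a subgraph of `G'` iff `H` is a subgraph of `G`. -/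
theorem subgraphIsomorphism_subdivision
    {W V V' : Type*} [Fintype W] [Fintype V] [Fintype V'] (k : ℕ)
    (H : SimpleGraph W) (hcard : Fintype.card W = k) (hmin : ∀ w : W, 2 ≤ H.degree w)
    (G : SimpleGraph V) (G' : SimpleGraph V') (ι : V ↪ V')
    (hold : ∀ u v : V, G'.Adj (ι u) (ι v) ↔ G.Adj u v)
    (hnew : ∀ a' b' : V', G'.Adj a' b' →
      (a' ∉ Set.range ι ∨ b' ∉ Set.range ι) →
      ∃ (x y : V) (p : G'.Walk (ι x) (ι y)), p.IsPath ∧ k + 1 ≤ p.length ∧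
        s(a', b') ∈ p.edges ∧
        ∀ z ∈ p.support, z ≠ ι x → z ≠ ι y →
          z ∉ Set.range ι ∧ G'.degree z = 2) :
    IsSubgraphOf H G' ↔ IsSubgraphOf H G := by
  constructor
  · rintro ⟨f, hf⟩
    -- First show that the image of `f` lies in the range of `ι`.
    have key : ∀ w : W, f w ∈ Set.range ι := by
      by_contra hcon
      push_neg at hcon
      obtain ⟨w0, hw0⟩ := hcon
      have hdegpos : 0 < H.degree w0 := by have := hmin w0; omega
      obtain ⟨w1, hw1⟩ := (SimpleGraph.degree_pos_iff_exists_adj H w0).mp hdegpos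
      have hadj' : G'.Adj (f w0) (f w1) := f.map_adj hw1
      obtain ⟨x, y, p, hp, hlen, hedge, hint⟩ := hnew (f w0) (f w1) hadj' (Or.inl hw0)
      -- The propagation step along the path.
      have step : ∀ j, 0 < j → j < p.length → p.getVert j ∈ Set.range f →
          p.getVert (j - 1) ∈ Set.range f ∧ p.getVert (j + 1) ∈ Set.range f := by
        rintro j hj0 hjL ⟨w, hw⟩
        have hzsup : p.getVert j ∈ p.support :=
          SimpleGraph.Walk.mem_support_iff_exists_getVert.mpr ⟨j, rfl, le_of_lt hjL⟩
        have hzx : p.getVert j ≠ ι x := by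
          intro h
          have h0 : p.getVert j = p.getVert 0 := by simpa using h
          have := path_getVert_inj hp (le_of_lt hjL) (Nat.zero_le _) h0
          omega
        have hzy : p.getVert j ≠ ι y := by
          intro h
          have h0 : p.getVert j = p.getVert p.length := by simpa using h
          have := path_getVert_inj hp (le_of_lt hjL) le_rfl h0
          omega
        obtain ⟨hznew, hzdeg⟩ := hint _ hzsup hzx hzy
        have hadj1 : G'.Adj (p.getVert j) (p.getVert (j + 1)) := p.adj_getVert_succ hjL
        have hadj2 : G'.Adj (p.getVert j) (p.getVert (j - 1)) := by
          have h' := p.adj_getVert_succ (i := j - 1) (by omega)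
          have hj1 : j - 1 + 1 = j := by omega
          rw [hj1] at h'
          exact h'.symm
        have hne : p.getVert (j - 1) ≠ p.getVert (j + 1) := by
          intro h
          have := path_getVert_inj hp (by omega) (by omega) h
          omega
        have hsub : ({p.getVert (j - 1), p.getVert (j + 1)} : Finset V')
            ⊆ G'.neighborFinset (p.getVert j) := by
          intro t ht
          simp only [Finset.mem_insert, Finset.mem_singleton] at ht
          rcases ht with rfl | rfl
          · exact (SimpleGraph.mem_neighborFinset _ _ _).mpr hadj2
          · exact (SimpleGraph.mem_neighborFinset _ _ _).mpr hadj1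
        have hcard2 : ({p.getVert (j - 1), p.getVert (j + 1)} : Finset V').card = 2 :=
          Finset.card_pair hne
        have heq : G'.neighborFinset (p.getVert j)
            = {p.getVert (j - 1), p.getVert (j + 1)} := by
          refine (Finset.eq_of_subset_of_card_le hsub ?_).symm
          rw [hcard2, SimpleGraph.card_neighborFinset_eq_degree, hzdeg]
        -- image of neighbors of `w`
        have himg : (H.neighborFinset w).image f ⊆ G'.neighborFinset (p.getVert j) := by
          intro t ht
          simp only [Finset.mem_image, SimpleGraph.mem_neighborFinset] at ht ⊢
          obtain ⟨s, hs, rfl⟩ := ht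
          rw [← hw]
          exact f.map_adj hs
        have hcardimg : (G'.neighborFinset (p.getVert j)).card
            ≤ ((H.neighborFinset w).image f).card := by
          rw [Finset.card_image_of_injective _ hf,
            SimpleGraph.card_neighborFinset_eq_degree, hzdeg]
          exact hmin w
        have himage : (H.neighborFinset w).image f = G'.neighborFinset (p.getVert j) :=
          Finset.eq_of_subset_of_card_le himg hcardimg
        constructor
        · have : p.getVert (j - 1) ∈ (H.neighborFinset w).image f := by
            rw [himage, heq]; simp
          obtain ⟨s, _, hs⟩ := Finset.mem_image.mp this
          exact ⟨s, hs⟩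
        · have : p.getVert (j + 1) ∈ (H.neighborFinset w).image f := by
            rw [himage, heq]; simp
          obtain ⟨s, _, hs⟩ := Finset.mem_image.mp this
          exact ⟨s, hs⟩
      -- locate `f w0` on the path
      have hsup0 : f w0 ∈ p.support := p.fst_mem_support_of_mem_edges hedge
      obtain ⟨i, hieq, hile⟩ := SimpleGraph.Walk.mem_support_iff_exists_getVert.mp hsup0
      have hi0 : 0 < i := by
        rcases Nat.eq_zero_or_pos i with rfl | h
        · exfalso
          apply hw0
          rw [← hieq]
          simp only [SimpleGraph.Walk.getVert_zero]
          exact ⟨x, rfl⟩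
        · exact h
      have hiL : i < p.length := by
        rcases lt_or_eq_of_le hile with h | h
        · exact h
        · exfalso
          apply hw0
          rw [← hieq, h]
          simp only [SimpleGraph.Walk.getVert_length]
          exact Set.mem_range_self y
      have forward : ∀ d, i + d ≤ p.length → p.getVert (i + d) ∈ Set.range f := by
        intro d
        induction d with
        | zero => intro _; exact ⟨w0, by simpa using hieq.symm⟩
        | succ n ih =>
          intro hle
          have h1 := ih (by omega)
          have := (step (i + n) (by omega) (by omega) h1).2
          simpa [Nat.add_assoc] using this
      have backward : ∀ d, d ≤ i → p.getVert (i - d) ∈ Set.range f := by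
        intro d
        induction d with
        | zero => intro _; exact ⟨w0, by simpa using hieq.symm⟩
        | succ n ih =>
          intro hle
          have h1 := ih (by omega)
          have := (step (i - n) (by omega) (by omega) h1).1
          have hnat : i - n - 1 = i - (n + 1) := by omega
          rwa [hnat] at this
      have all : ∀ j, j ≤ p.length → p.getVert j ∈ Set.range f := by
        intro j hj
        rcases le_or_gt j i with h | h
        · have := backward (i - j) (by omega)
          have hnat : i - (i - j) = j := by omega
          rwa [hnat] at this
        · have := forward (j - i) (by omega)
          have hnat : i + (j - i) = j := by omega
          rwa [hnat] at this
      have hex : ∀ j : Fin (p.length + 1), ∃ w, f w = p.getVert (j : ℕ) := by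
        intro j
        exact all j (by omega)
      choose g hg using hex
      have hginj : Function.Injective g := by
        intro j1 j2 h
        have h' : p.getVert (j1 : ℕ) = p.getVert (j2 : ℕ) := by
          rw [← hg j1, ← hg j2, h]
        exact Fin.ext (path_getVert_inj hp (by omega) (by omega) h')
      have hle := Fintype.card_le_of_injective g hginj
      rw [Fintype.card_fin, hcard] at hle
      omega
    choose g hg using key
    have hginj : Function.Injective g := by
      intro a b hab
      apply hf
      rw [← hg a, ← hg b, hab]
    refine ⟨⟨g, ?_⟩, hginj⟩
    intro a b hab
    exact (hold _ _).mp (by rw [hg a, hg b]; exact f.map_adj hab)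
  · rintro ⟨f, hf⟩
    refine ⟨⟨fun w => ι (f w), ?_⟩, fun a b h => hf (ι.injective h)⟩
    intro a b hab
    exact (hold _ _).mpr (f.map_adj hab)
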